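/- Let k, ℓ ≥ 0, let G_{k,ℓ} = H_1 × ⋯ × H_k × Z_2^ℓ where each H_i is the dihedral group of order 8 generated by a_i of order 4 and involution b_i with b_i a_i b_i = a_i^{-1}, and let Ω_{k,ℓ} = {a_i², b_i, a_i b_i (1 ≤ i ≤ k)} ∪ {c_1,…,c_ℓ}. In the Cayley graph Γ_{k,ℓ} = Cay(G_{k,ℓ}, Ω_{k,ℓ}), if u and w are two distinct neighbors of a vertex v having v as their unique common neighbor, then {u, w} = {b_i v, a_i b_i v} for some 1 ≤ i ≤ k. -/

import Mathlib

/-- The Cayley graph of a group with respect to a connection set `S`. -/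
def cayley {G : Type*} [Group G] (S : Set G) : SimpleGraph G :=
  SimpleGraph.fromRel (fun x y => ∃ s ∈ S, y = s * x)

/-- The group `G_{k,ℓ} = H_1 × ⋯ × H_k × Z_2^ℓ` with `H_i` dihedral of order 8. -/
abbrev GN (k l : ℕ) := (Fin k → DihedralGroup 4) × (Fin l → Multiplicative (ZMod 2))

def aGen (k l : ℕ) (i : Fin k) : GN k l := (Pi.mulSingle i (DihedralGroup.r 1), 1)

def bGen (k l : ℕ) (i : Fin k) : GN k l := (Pi.mulSingle i (DihedralGroup.sr 0), 1)

def cGen (k l : ℕ) (j : Fin l) : GN k l :=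
  (1, Pi.mulSingle j (Multiplicative.ofAdd (1 : ZMod 2)))

/-- The connection set `Ω_{k,ℓ} = {a_i², b_i, a_i b_i (1 ≤ i ≤ k)} ∪ {c_1, …, c_ℓ}`. -/
def OmegaN (k l : ℕ) : Set (GN k l) :=
  {x | (∃ i, x = (aGen k l i) ^ 2 ∨ x = bGen k l i ∨ x = aGen k l i * bGen k l i) ∨
    ∃ j, x = cGen k l j}

namespace UCNaux

open DihedralGroup

lemma pair_mul {k l : ℕ} (i : Fin k) (x y : DihedralGroup 4) :
    ((Pi.mulSingle i x, 1) : GN k l) * (Pi.mulSingle i y, 1) = (Pi.mulSingle i (x * y), 1) := by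
  rw [Prod.mk_mul_mk, ← Pi.mulSingle_mul, mul_one]

lemma aGen_sq {k l : ℕ} (i : Fin k) :
    (aGen k l i) ^ 2 = ((Pi.mulSingle i (r 2), 1) : GN k l) := by
  rw [sq]
  show ((Pi.mulSingle i (r 1), 1) : GN k l) * (Pi.mulSingle i (r 1), 1) = _
  rw [pair_mul]
  have : (r 1 : DihedralGroup 4) * r 1 = r 2 := by decide
  rw [this]

lemma ab_eq {k l : ℕ} (i : Fin k) :
    aGen k l i * bGen k l i = ((Pi.mulSingle i (sr 3), 1) : GN k l) := by
  show ((Pi.mulSingle i (r 1), 1) : GN k l) * (Pi.mulSingle i (sr 0), 1) = _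
  rw [pair_mul]
  have : (r 1 : DihedralGroup 4) * sr 0 = sr 3 := by decide
  rw [this]

/-- Normal forms of the elements of `Ω`. -/
lemma omega_form {k l : ℕ} {s : GN k l} (hs : s ∈ OmegaN k l) :
    (∃ (i : Fin k) (g : DihedralGroup 4),
        (g = r 2 ∨ g = sr 0 ∨ g = sr 3) ∧ s = (Pi.mulSingle i g, 1)) ∨
      ∃ j, s = cGen k l j := by
  rcases hs with ⟨i, h | h | h⟩ | ⟨j, h⟩
  · exact Or.inl ⟨i, r 2, Or.inl rfl, by rw [h, aGen_sq]⟩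
  · exact Or.inl ⟨i, sr 0, Or.inr (Or.inl rfl), h⟩
  · exact Or.inl ⟨i, sr 3, Or.inr (Or.inr rfl), by rw [h, ab_eq]⟩
  · exact Or.inr ⟨j, h⟩

lemma omega_sq {k l : ℕ} {s : GN k l} (hs : s ∈ OmegaN k l) : s * s = 1 := by
  rcases omega_form hs with ⟨i, g, hg, rfl⟩ | ⟨j, rfl⟩
  · rw [pair_mul]
    have : g * g = 1 := by rcases hg with rfl | rfl | rfl <;> decide
    rw [this, Pi.mulSingle_one]
    rfl
  · show ((1 : Fin k → DihedralGroup 4), _) * (1, _) = 1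
    rw [Prod.mk_mul_mk, ← Pi.mulSingle_mul, one_mul]
    have : (Multiplicative.ofAdd (1 : ZMod 2)) * Multiplicative.ofAdd (1 : ZMod 2) = 1 := by
      decide
    rw [this, Pi.mulSingle_one]
    rfl

lemma omega_ne_one {k l : ℕ} {s : GN k l} (hs : s ∈ OmegaN k l) : s ≠ 1 := by
  rcases omega_form hs with ⟨i, g, hg, rfl⟩ | ⟨j, rfl⟩
  · intro h
    have h2 : g = 1 := by simpa using congrFun (congrArg Prod.fst h) i
    rcases hg with rfl | rfl | rfl <;> exact absurd h2 (by decide)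
  · intro h
    have h2 : Multiplicative.ofAdd (1 : ZMod 2) = 1 := by
      simpa [cGen] using congrFun (congrArg Prod.snd h) j
    exact absurd h2 (by decide)

lemma cGen_comm {k l : ℕ} (j : Fin l) (x : GN k l) : cGen k l j * x = x * cGen k l j := by
  obtain ⟨x1, x2⟩ := x
  show ((1 : Fin k → DihedralGroup 4), _) * _ = _ * (1, _)
  rw [Prod.mk_mul_mk, Prod.mk_mul_mk, one_mul, mul_one, mul_comm]

lemma adj_iff {k l : ℕ} (x y : GN k l) :
    (cayley (OmegaN k l)).Adj x y ↔ x ≠ y ∧ ∃ s ∈ OmegaN k l, y = s * x := by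
  rw [cayley, SimpleGraph.fromRel_adj]
  constructor
  · rintro ⟨hne, ⟨s, hs, rfl⟩ | ⟨s, hs, hxy⟩⟩
    · exact ⟨hne, s, hs, rfl⟩
    · refine ⟨hne, s, hs, ?_⟩
      rw [hxy, ← mul_assoc, omega_sq hs, one_mul]
  · rintro ⟨hne, s, hs, rfl⟩
    exact ⟨hne, Or.inl ⟨s, hs, rfl⟩⟩

end UCNaux

open DihedralGroup UCNaux in
theorem unique_common_neighbor (k l : ℕ) (v u w : GN k l) (huw : u ≠ w)
    (hu : (cayley (OmegaN k l)).Adj v u) (hw : (cayley (OmegaN k l)).Adj v w)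
    (huniq : ∀ z, (cayley (OmegaN k l)).Adj z u → (cayley (OmegaN k l)).Adj z w → z = v) :
    ∃ i : Fin k,
      (u = bGen k l i * v ∧ w = aGen k l i * bGen k l i * v) ∨
      (u = aGen k l i * bGen k l i * v ∧ w = bGen k l i * v) := by
  rw [adj_iff] at hu hw
  obtain ⟨-, s, hs, hus⟩ := hu
  obtain ⟨-, t, ht, hwt⟩ := hw
  have hst : s ≠ t := by
    rintro rfl
    exact huw (hus.trans hwt.symm)
  -- s and t do not commute
  have hnc : s * t ≠ t * s := by
    intro hcomm
    have hz1 : (cayley (OmegaN k l)).Adj (t * s * v) u := by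
      rw [adj_iff]
      refine ⟨?_, t, ht, ?_⟩
      · intro h
        rw [hus, mul_assoc, mul_eq_right] at h
        exact omega_ne_one ht h
      · rw [hus, ← mul_assoc, ← mul_assoc, omega_sq ht, one_mul]
    have hz2 : (cayley (OmegaN k l)).Adj (t * s * v) w := by
      rw [adj_iff]
      refine ⟨?_, s, hs, ?_⟩
      · intro h
        rw [hwt, mul_assoc] at h
        have h' := mul_left_cancel h
        rw [mul_eq_right] at h'
        exact omega_ne_one hs h'
      · rw [hwt, ← mul_assoc, ← mul_assoc, hcomm, mul_assoc t s s, omega_sq hs, mul_one]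
    have hv := huniq _ hz1 hz2
    rw [mul_eq_right] at hv
    have hteq : t = s := by
      simpa [mul_assoc, omega_sq hs] using congrArg (· * s) hv
    exact hst hteq.symm
  -- rule out the c generators
  rcases omega_form hs with ⟨i, g, hg, rfl⟩ | ⟨j, rfl⟩
  swap
  · exact absurd (cGen_comm j t) hnc
  rcases omega_form ht with ⟨i', g', hg', rfl⟩ | ⟨j, rfl⟩
  swap
  · exact absurd (cGen_comm j _).symm hnc
  rcases eq_or_ne i i' with rfl | hii
  · -- same coordinate
    have hpair : ∀ x y : DihedralGroup 4, x * y = y * x →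
        ((Pi.mulSingle i x, (1 : Fin l → Multiplicative (ZMod 2))) : GN k l) *
          (Pi.mulSingle i y, 1) = (Pi.mulSingle i y, 1) * (Pi.mulSingle i x, 1) := by
      intro x y hxy
      rw [pair_mul, pair_mul, hxy]
    have hgg : g ≠ g' := by
      rintro rfl
      exact hst rfl
    have hr2 : ∀ z : DihedralGroup 4, r 2 * z = z * r 2 := by decide
    rcases hg with rfl | rfl | rfl
    · exact absurd (hpair _ _ (hr2 g')) hnc
    · rcases hg' with rfl | rfl | rfl
      · exact absurd (hpair _ _ (hr2 (sr 0)).symm) hnc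
      · exact absurd rfl hgg
      · refine ⟨i, Or.inl ⟨?_, ?_⟩⟩
        · rw [hus]; rfl
        · rw [hwt, ab_eq]
    · rcases hg' with rfl | rfl | rfl
      · exact absurd (hpair _ _ (hr2 (sr 3)).symm) hnc
      · refine ⟨i, Or.inr ⟨?_, ?_⟩⟩
        · rw [hus, ab_eq]
        · rw [hwt]; rfl
      · exact absurd rfl hgg
  · -- different coordinates
    exfalso
    apply hnc
    have hc : (Pi.mulSingle i g : Fin k → DihedralGroup 4) * Pi.mulSingle i' g' =
        Pi.mulSingle i' g' * Pi.mulSingle i g :=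
      Pi.mulSingle_commute (f := fun _ : Fin k => DihedralGroup 4) hii g g'
    rw [Prod.mk_mul_mk, Prod.mk_mul_mk, hc]
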